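/- Let f be a QPF circle endomorphism homotopic to the identity (a continuous skew product over an irrational rotation of T¹ with degree-one fibre maps) and let M be a minimal set of f. Then for every (θ,x) ∈ M and every open neighbourhood U of (θ,x), the first-coordinate projection π₁(U ∩ M) contains a nonempty open interval of T¹. -/

import Mathlib

open Filter Topology

/-- A minimal set of a continuous map `g`: a nonempty compact `g`-invariant set containing
no proper nonempty compact `g`-invariant subset. -/
def IsMinimalSet {X : Type*} [TopologicalSpace X] (g : X → X) (M : Set X) : Prop :=
  M.Nonempty ∧ IsCompact M ∧ Set.MapsTo g M M ∧
    ∀ M' : Set X, M' ⊆ M → M'.Nonempty → IsCompact M' → Set.MapsTo g M' M' → M' = M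

lemma dense_zmul (ω : ℝ) (hω : Irrational ω) :
    DenseRange (fun k : ℤ => k • ((ω : ℝ) : AddCircle (1:ℝ))) := by
  have hS : Dense ((AddSubgroup.closure {1, ω} : AddSubgroup ℝ) : Set ℝ) := by
    rcases AddSubgroup.dense_or_cyclic (AddSubgroup.closure {1, ω}) with h | ⟨a, ha⟩
    · exact h
    · exfalso
      have h1 : (1:ℝ) ∈ AddSubgroup.closure {1, ω} := AddSubgroup.subset_closure (by simp)
      have h2 : ω ∈ AddSubgroup.closure {1, ω} := AddSubgroup.subset_closure (by simp)
      rw [ha, AddSubgroup.mem_closure_singleton] at h1 h2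
      obtain ⟨m, hm⟩ := h1
      obtain ⟨k, hk⟩ := h2
      rw [zsmul_eq_mul] at hm hk
      have hm0 : (m : ℝ) ≠ 0 := by
        rintro h
        rw [h, zero_mul] at hm
        exact one_ne_zero hm.symm
      refine hω ⟨(k : ℚ) / (m : ℚ), ?_⟩
      have hkm : ω = (k : ℝ) / (m : ℝ) := by
        field_simp
        linear_combination (k : ℝ) * hm - (m : ℝ) * hk
      rw [hkm]; push_cast; ring
  have hmk : Dense ((fun r : ℝ => (r : AddCircle (1:ℝ))) ''
      ((AddSubgroup.closure {1, ω} : AddSubgroup ℝ) : Set ℝ)) := by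
    rw [dense_iff_closure_eq]
    apply Set.eq_univ_of_univ_subset
    have h1 : (Set.univ : Set (AddCircle (1:ℝ))) =
        (fun r : ℝ => (r : AddCircle (1:ℝ))) ''
          closure ((AddSubgroup.closure {1, ω} : AddSubgroup ℝ) : Set ℝ) := by
      rw [hS.closure_eq, Set.image_univ]
      exact (Set.range_eq_univ.2
        (QuotientAddGroup.mk'_surjective (AddSubgroup.zmultiples (1:ℝ)))).symm
    rw [h1]
    exact image_closure_subset_closure_image (AddCircle.continuous_mk' 1)
  refine hmk.mono ?_
  rintro _ ⟨r, hr, rfl⟩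
  have hr' : r ∈ AddSubgroup.closure ({1, ω} : Set ℝ) := hr
  show ∃ k : ℤ, k • ((ω : ℝ) : AddCircle (1:ℝ)) = (r : AddCircle (1:ℝ))
  refine AddSubgroup.closure_induction (k := ({1, ω} : Set ℝ))
    (p := fun (x : ℝ) _ => ∃ k : ℤ, k • ((ω : ℝ) : AddCircle (1:ℝ)) = (x : AddCircle (1:ℝ)))
    ?_ ?_ ?_ ?_ hr'
  · rintro x (rfl | rfl)
    · exact ⟨0, by simp [(AddCircle.coe_period (1:ℝ))]⟩
    · exact ⟨1, by simp⟩
  · exact ⟨0, by simp⟩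
  · rintro x y hx hy ⟨k1, hk1⟩ ⟨k2, hk2⟩
    exact ⟨k1 + k2, by rw [add_zsmul, hk1, hk2]; rfl⟩
  · rintro x hx ⟨k, hk⟩
    exact ⟨-k, by rw [neg_zsmul, hk]; rfl⟩

theorem stmt14 (ω : ℝ) (hω : Irrational ω)
    (f : AddCircle (1 : ℝ) × AddCircle (1 : ℝ) → AddCircle (1 : ℝ) × AddCircle (1 : ℝ))
    (hf : Continuous f)
    (hskew : ∀ p : AddCircle (1 : ℝ) × AddCircle (1 : ℝ),
      (f p).1 = p.1 + ((ω : ℝ) : AddCircle (1 : ℝ)))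
    (hhom : (⟨f, hf⟩ : C(AddCircle (1 : ℝ) × AddCircle (1 : ℝ),
        AddCircle (1 : ℝ) × AddCircle (1 : ℝ))).Homotopic
      ⟨fun p => (p.1 + ((ω : ℝ) : AddCircle (1 : ℝ)), p.2),
        (continuous_fst.add continuous_const).prodMk continuous_snd⟩)
    (M : Set (AddCircle (1 : ℝ) × AddCircle (1 : ℝ))) (hM : IsMinimalSet f M) :
    ∀ p ∈ M, ∀ U : Set (AddCircle (1 : ℝ) × AddCircle (1 : ℝ)), IsOpen U → p ∈ U →
      (interior (Prod.fst '' (U ∩ M))).Nonempty := by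
  obtain ⟨hMne, hMc, hMmaps, hMmin⟩ := hM
  intro p hp U hU hpU
  set ωc : AddCircle (1:ℝ) := ((ω : ℝ) : AddCircle (1:ℝ)) with hωc
  have hiter_mem : ∀ n : ℕ, ∀ z ∈ M, f^[n] z ∈ M := fun n z hz => hMmaps.iterate n hz
  have hiter_fst : ∀ (n : ℕ) (z : AddCircle (1:ℝ) × AddCircle (1:ℝ)),
      (f^[n] z).1 = z.1 + n • ωc := by
    intro n
    induction n with
    | zero => intro z; simp
    | succ n ih =>
        intro z
        rw [Function.iterate_succ_apply', hskew, ih, succ_nsmul, add_assoc]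
  -- Step: the projection of M is everything
  have hAc : IsCompact (Prod.fst '' M) := hMc.image continuous_fst
  have hAinv : ∀ x ∈ Prod.fst '' M, x + ωc ∈ Prod.fst '' M := by
    rintro _ ⟨z, hz, rfl⟩
    exact ⟨f z, hMmaps hz, (hskew z).symm ▸ rfl⟩
  have hA : Prod.fst '' M = Set.univ := by
    have hAcl : IsClosed (Prod.fst '' M) := hAc.isClosed
    set g : ℕ → Set (AddCircle (1:ℝ)) :=
      fun n => (fun x => x + n • ωc) '' (Prod.fst '' M) with hg
    have hsub : ∀ n, g (n+1) ⊆ g n := by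
      intro n
      rintro _ ⟨x, hx, rfl⟩
      refine ⟨x + ωc, hAinv x hx, ?_⟩
      rw [succ_nsmul]
      abel_nf
    have hgne : ∀ n, (g n).Nonempty := fun n =>
      ((hMne.image _).image _)
    have hgc : ∀ n, IsCompact (g n) := fun n =>
      hAc.image (continuous_id.add continuous_const)
    have hB := IsCompact.nonempty_iInter_of_sequence_nonempty_isCompact_isClosed g hsub hgne
      (hgc 0) (fun n => (hgc n).isClosed)
    obtain ⟨x, hx⟩ := hB
    have hxn : ∀ n : ℕ, x ∈ g n := fun n => Set.mem_iInter.1 hx n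
    have horb : ∀ k : ℤ, x + k • ωc ∈ Prod.fst '' M := by
      intro k
      induction k using Int.induction_on with
      | zero =>
          obtain ⟨a, ha, hax⟩ := hxn 0
          have hax' : a = x := by simpa using hax
          rw [zero_zsmul, add_zero, ← hax']
          exact ha
      | succ i ih =>
          have h2 := hAinv _ ih
          rw [add_zsmul, one_zsmul, ← add_assoc]
          exact h2
      | pred i ih =>
          obtain ⟨a, ha, hax⟩ := hxn (i+1)
          have hax' : a + ((i+1 : ℕ) : ℤ) • ωc = x := by
            rw [natCast_zsmul]; exact hax
          have hxa : x + (-(i:ℤ) - 1) • ωc = a := by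
            rw [← hax', add_assoc, ← add_zsmul]
            have h0 : ((i+1:ℕ):ℤ) + (-(i:ℤ)-1) = 0 := by push_cast; ring
            rw [h0, zero_zsmul, add_zero]
          rw [hxa]
          exact ha
    have hdr : DenseRange (fun k : ℤ => k • ωc + x) :=
      DenseRange.comp ((add_right_surjective x).denseRange) (dense_zmul ω hω)
        (continuous_id.add continuous_const)
    have hdense : Dense (Prod.fst '' M) := by
      refine Dense.mono ?_ hdr
      rintro _ ⟨k, rfl⟩
      show k • ωc + x ∈ Prod.fst '' M
      rw [add_comm]
      exact horb k
    rw [← hAcl.closure_eq]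
    exact hdense.closure_eq
  -- Step: choose a compact neighbourhood inside U
  obtain ⟨K, hKc, hpK, hKU⟩ := exists_compact_subset hU hpU
  -- Step: every point of M visits interior K
  have hcover : M ⊆ ⋃ n : ℕ, f^[n] ⁻¹' (interior K) := by
    by_contra hc
    obtain ⟨z, hzM, hz⟩ := Set.not_subset.1 hc
    have hz' : ∀ n : ℕ, f^[n] z ∉ interior K := by
      intro n hn
      exact hz (Set.mem_iUnion.2 ⟨n, hn⟩)
    set M' : Set (AddCircle (1:ℝ) × AddCircle (1:ℝ)) :=
      M ∩ ⋂ n : ℕ, f^[n] ⁻¹' (interior K)ᶜ with hM'def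
    have hM'sub : M' ⊆ M := Set.inter_subset_left
    have hM'ne : M'.Nonempty :=
      ⟨z, hzM, Set.mem_iInter.2 fun n => hz' n⟩
    have hM'c : IsCompact M' :=
      hMc.inter_right (isClosed_iInter fun n =>
        (isOpen_interior.isClosed_compl).preimage (hf.iterate n))
    have hM'maps : Set.MapsTo f M' M' := by
      rintro w ⟨hwM, hw⟩
      refine ⟨hMmaps hwM, Set.mem_iInter.2 fun n => ?_⟩
      have := Set.mem_iInter.1 hw (n+1)
      simpa [Function.iterate_succ_apply] using this
    have heq := hMmin M' hM'sub hM'ne hM'c hM'maps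
    have hpM' : p ∈ M' := heq ▸ hp
    have := Set.mem_iInter.1 hpM'.2 0
    simp only [Function.iterate_zero, id_eq, Set.mem_preimage, Set.mem_compl_iff] at this
    exact this hpK
  obtain ⟨t, ht⟩ := hMc.elim_finite_subcover (fun n : ℕ => f^[n] ⁻¹' (interior K))
    (fun n => isOpen_interior.preimage (hf.iterate n)) hcover
  -- Step: translates of fst '' (K ∩ M) cover the circle; apply Baire
  set K' : Set (AddCircle (1:ℝ)) := Prod.fst '' (K ∩ M) with hK'def
  have hK'c : IsCompact K' := (hKc.inter_right hMc.isClosed).image continuous_fst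
  set D : ℕ → Set (AddCircle (1:ℝ)) :=
    fun n => if n ∈ t then (fun x => x + n • ωc) ⁻¹' K' else ∅ with hDdef
  have hDcl : ∀ n, IsClosed (D n) := by
    intro n
    by_cases h : n ∈ t
    · simpa [hDdef, h] using hK'c.isClosed.preimage
        (continuous_add_right (n • ωc))
    · simp [hDdef, h]
  have hDcov : ⋃ n, D n = Set.univ := by
    apply Set.eq_univ_of_forall
    intro y
    have hy : y ∈ Prod.fst '' M := hA ▸ Set.mem_univ y
    obtain ⟨z, hzM, rfl⟩ := hy
    have := ht hzM
    obtain ⟨n, hn, hzn⟩ := Set.mem_iUnion₂.1 this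
    refine Set.mem_iUnion.2 ⟨n, ?_⟩
    have hfz : f^[n] z ∈ K ∩ M := ⟨interior_subset hzn, hiter_mem n z hzM⟩
    have : z.1 + n • ωc ∈ K' := ⟨f^[n] z, hfz, (hiter_fst n z)⟩
    simp only [hDdef, if_pos hn]
    exact this
  obtain ⟨n, hn⟩ := nonempty_interior_of_iUnion_of_closed hDcl hDcov
  have hnt : n ∈ t := by
    by_contra h
    simp [hDdef, h] at hn
  have hn' : (interior ((fun x => x + n • ωc) ⁻¹' K')).Nonempty := by
    simpa [hDdef, hnt] using hn
  -- transfer interior through the translation homeomorphism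
  have hK'int : (interior K').Nonempty := by
    have he : (fun x : AddCircle (1:ℝ) => x + n • ωc) = ⇑(Homeomorph.addRight (n • ωc)) := rfl
    rw [he, ← Homeomorph.preimage_interior] at hn'
    obtain ⟨y, hy⟩ := hn'
    exact ⟨_, hy⟩
  refine hK'int.mono (interior_mono ?_)
  rw [hK'def]
  exact Set.image_mono (Set.inter_subset_inter_left _ hKU)
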